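/- Let φ̂ : ℝ → ℂ be an even Schwartz function. Then there exists a constant C such that for all x > 0, ∫_0^∞ |φ̂(y+x) − φ̂(y−x)| · y dy ≤ C·x. -/

import Mathlib

open MeasureTheory Set

noncomputable def auxh (y : ℝ) : ℝ := if y ≤ 1 then 1 else (y ^ 3)⁻¹

lemma auxh_integrable : IntegrableOn auxh (Ioi (0:ℝ)) := by
  have h1 : Ioc (0:ℝ) 1 ∪ Ioi 1 = Ioi 0 := Ioc_union_Ioi_eq_Ioi zero_le_one
  rw [← h1]
  apply IntegrableOn.union
  · apply IntegrableOn.congr_fun (f := fun _ : ℝ => (1:ℝ)) ?_ (fun y hy => ?_) measurableSet_Ioc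
    · apply integrableOn_const ?_
      simp [Real.volume_Ioc]
    · simp [auxh, hy.2]
  · have : IntegrableOn (fun y : ℝ => y ^ (-3 : ℝ)) (Ioi 1) :=
      integrableOn_Ioi_rpow_of_lt (by norm_num) one_pos
    apply this.congr_fun (fun y hy => ?_) measurableSet_Ioi
    have hy1 : (1:ℝ) < y := hy
    rw [Real.rpow_neg (by linarith), show (3:ℝ) = ((3:ℕ):ℝ) by norm_num, Real.rpow_natCast,
      auxh, if_neg (by linarith)]

lemma auxh_nonneg {y : ℝ} (hy : 0 < y) : 0 ≤ auxh y := by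
  unfold auxh; split <;> positivity

lemma deriv_bound (φhat : SchwartzMap ℝ ℂ) :
    ∃ K : ℝ, 0 < K ∧ ∀ t : ℝ, (1 + |t|) ^ 4 * ‖deriv φhat t‖ ≤ K := by
  set φ' := SchwartzMap.derivCLM ℝ ℂ φhat with hφ'
  obtain ⟨C0, hC0pos, hC0⟩ := φ'.decay 0 0
  obtain ⟨C4, hC4pos, hC4⟩ := φ'.decay 4 0
  refine ⟨8 * (C0 + C4), by positivity, fun t => ?_⟩
  have h0 := hC0 t
  have h4 := hC4 t
  rw [norm_iteratedFDeriv_zero] at h0 h4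
  have hder : ‖deriv (⇑φhat) t‖ = ‖φ' t‖ := by
    rw [hφ', SchwartzMap.derivCLM_apply]
  rw [hder]
  have hnn : 0 ≤ ‖φ' t‖ := norm_nonneg _
  have habs : 0 ≤ |t| := abs_nonneg t
  have h0' : ‖φ' t‖ ≤ C0 := by simpa using h0
  have h4' : ‖t‖ ^ 4 * ‖φ' t‖ ≤ C4 := h4
  rw [Real.norm_eq_abs] at h4'
  nlinarith [sq_nonneg (1 - |t|), sq_nonneg (1 + |t|), sq_nonneg (|t| * ‖φ' t‖),
    mul_nonneg habs hnn, sq_nonneg (1 - |t|^2), mul_nonneg (mul_nonneg habs habs) hnn]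

lemma small_pointwise (φhat : SchwartzMap ℝ ℂ) {K : ℝ}
    (hK : ∀ t : ℝ, (1 + |t|) ^ 4 * ‖deriv (⇑φhat) t‖ ≤ K)
    {x y : ℝ} (hx : 0 < x) (hx1 : x ≤ 1) (hy : 0 < y) :
    ‖φhat (y + x) - φhat (y - x)‖ * y ≤ 32 * K * x * auxh y := by
  have hKnn : 0 ≤ K := le_trans (by positivity) (hK 0)
  set m := max 0 (y - x) with hm
  have hm0 : 0 ≤ m := le_max_left _ _
  have hmp : (0:ℝ) < (1 + m) ^ 4 := by positivity
  have hcont : Continuous (deriv (⇑φhat)) := by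
    have h1 : deriv (⇑φhat) = ⇑(SchwartzMap.derivCLM ℝ ℂ φhat) := by
      funext t; rw [SchwartzMap.derivCLM_apply]
    rw [h1]; exact (SchwartzMap.derivCLM ℝ ℂ φhat).continuous
  have hftc : φhat (y + x) - φhat (y - x) = ∫ t in (y-x)..(y+x), deriv (⇑φhat) t := by
    rw [intervalIntegral.integral_deriv_eq_sub (fun t _ => (φhat.differentiable).differentiableAt)
      (hcont.intervalIntegrable _ _)]
  have hb : ∀ t ∈ Set.uIoc (y-x) (y+x), ‖deriv (⇑φhat) t‖ ≤ K / (1+m)^4 := by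
    intro t ht
    rw [uIoc_of_le (by linarith)] at ht
    have h1 : 1 + m ≤ 1 + |t| := by
      rcases le_or_gt (y - x) 0 with h | h
      · have hz : m = 0 := max_eq_left h
        rw [hz]; simp [abs_nonneg]
      · have hmym : m = y - x := max_eq_right h.le
        have h2 : y - x < t := ht.1
        have h3 : t ≤ |t| := le_abs_self t
        rw [hmym]; linarith
    rw [le_div_iff₀ hmp]
    calc ‖deriv (⇑φhat) t‖ * (1+m)^4
        ≤ ‖deriv (⇑φhat) t‖ * (1+|t|)^4 :=
          mul_le_mul_of_nonneg_left (pow_le_pow_left₀ (by positivity) h1 4) (norm_nonneg _)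
      _ = (1+|t|)^4 * ‖deriv (⇑φhat) t‖ := mul_comm _ _
      _ ≤ K := hK t
  have hnorm : ‖φhat (y + x) - φhat (y - x)‖ ≤ K / (1+m)^4 * (2*x) := by
    rw [hftc]
    have h := intervalIntegral.norm_integral_le_of_norm_le_const hb
    have habs : |(y + x) - (y - x)| = 2 * x := by
      rw [show (y + x) - (y - x) = 2*x by ring, abs_of_pos (by linarith)]
    rwa [habs] at h
  have hkey : y * ((1+m)^4)⁻¹ ≤ 16 * auxh y := by
    rcases le_or_gt y 1 with h | h
    · rw [auxh, if_pos h]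
      have h14 : (1:ℝ) ≤ (1+m)^4 := one_le_pow₀ (by linarith)
      calc y * ((1+m)^4)⁻¹ ≤ y * 1 :=
            mul_le_mul_of_nonneg_left (inv_le_one_of_one_le₀ h14) hy.le
        _ ≤ 16 * 1 := by linarith
    · rw [auxh, if_neg (not_le.2 h)]
      have hyx : y ≤ 1 + m := by
        have h2 : y - x ≤ m := le_max_right _ _
        linarith
      have h4 : y^4 ≤ (1+m)^4 := pow_le_pow_left₀ (by linarith) hyx 4
      have h5 : ((1+m)^4)⁻¹ ≤ (y^4)⁻¹ := inv_anti₀ (by positivity) h4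
      calc y * ((1+m)^4)⁻¹ ≤ y * (y^4)⁻¹ := mul_le_mul_of_nonneg_left h5 hy.le
        _ = (y^3)⁻¹ := by field_simp
        _ ≤ 16 * (y^3)⁻¹ := by
            have : (0:ℝ) ≤ (y^3)⁻¹ := by positivity
            linarith
  calc ‖φhat (y + x) - φhat (y - x)‖ * y ≤ (K / (1+m)^4 * (2*x)) * y :=
        mul_le_mul_of_nonneg_right hnorm hy.le
    _ = 2 * (K * x) * (y * ((1+m)^4)⁻¹) := by rw [div_eq_mul_inv]; ring
    _ ≤ 2 * (K * x) * (16 * auxh y) :=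
        mul_le_mul_of_nonneg_left hkey (by
          have : 0 ≤ K * x := mul_nonneg hKnn hx.le
          linarith)
    _ = 32 * K * x * auxh y := by ring

theorem stmt_5 (φhat : SchwartzMap ℝ ℂ) (heven : ∀ y : ℝ, φhat (-y) = φhat y) :
    ∃ C : ℝ, 0 < C ∧ ∀ x : ℝ, 0 < x →
      ∫ y in Ioi (0:ℝ), ‖φhat (y + x) - φhat (y - x)‖ * y ≤ C * x := by
  obtain ⟨K, hKpos, hK⟩ := deriv_bound φhat
  have hG : Integrable (fun t : ℝ => (1 + |t|) * ‖φhat t‖) := by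
    have h0 : Integrable (fun t : ℝ => ‖φhat t‖) := φhat.integrable.norm
    have h1 : Integrable (fun t : ℝ => ‖t‖ ^ 1 * ‖φhat t‖) := φhat.integrable_pow_mul volume 1
    have h2 := h0.add h1
    have heq : (fun t : ℝ => (1 + |t|) * ‖φhat t‖)
        = fun t : ℝ => ‖φhat t‖ + ‖t‖ ^ 1 * ‖φhat t‖ := by
      funext t; rw [Real.norm_eq_abs]; ring
    rwa [heq]
  set I1 := ∫ t : ℝ, (1 + |t|) * ‖φhat t‖ with hI1def
  have hI1 : 0 ≤ I1 := integral_nonneg fun t => by positivity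
  set I2 := ∫ y in Ioi (0:ℝ), auxh y with hI2def
  have hI2 : 0 ≤ I2 := setIntegral_nonneg measurableSet_Ioi fun y hy => auxh_nonneg hy
  refine ⟨2 * I1 + 32 * K * I2 + 1, by nlinarith, fun x hx => ?_⟩
  rcases le_or_gt x 1 with hx1 | hx1
  · -- small x : use the derivative estimate
    calc ∫ y in Ioi (0:ℝ), ‖φhat (y + x) - φhat (y - x)‖ * y
        ≤ ∫ y in Ioi (0:ℝ), 32 * K * x * auxh y := by
          apply integral_mono_of_nonneg
          · exact (ae_restrict_iff' measurableSet_Ioi).2 (ae_of_all _ fun y hy =>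
              mul_nonneg (norm_nonneg _) (le_of_lt hy))
          · exact (auxh_integrable.const_mul (32 * K * x))
          · exact (ae_restrict_iff' measurableSet_Ioi).2 (ae_of_all _ fun y hy =>
              small_pointwise φhat hK hx hx1 hy)
      _ = 32 * K * x * I2 := by rw [hI2def, integral_const_mul]
      _ ≤ (2 * I1 + 32 * K * I2 + 1) * x := by nlinarith [mul_nonneg hI1 hx.le]
  · -- large x : use decay of φhat itself
    have hGa : Integrable (fun y : ℝ => (1 + |y + x|) * ‖φhat (y + x)‖) := hG.comp_add_right x
    have hGb : Integrable (fun y : ℝ => (1 + |y - x|) * ‖φhat (y - x)‖) := hG.comp_sub_right x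
    have hRint : Integrable (fun y : ℝ =>
        x * ((1 + |y + x|) * ‖φhat (y + x)‖ + (1 + |y - x|) * ‖φhat (y - x)‖)) :=
      (hGa.add hGb).const_mul x
    have hRnn : ∀ y : ℝ, 0 ≤ x * ((1 + |y + x|) * ‖φhat (y + x)‖ + (1 + |y - x|) * ‖φhat (y - x)‖) :=
      fun y => mul_nonneg hx.le (add_nonneg
        (mul_nonneg (by positivity) (norm_nonneg _)) (mul_nonneg (by positivity) (norm_nonneg _)))
    calc ∫ y in Ioi (0:ℝ), ‖φhat (y + x) - φhat (y - x)‖ * y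
        ≤ ∫ y in Ioi (0:ℝ),
            x * ((1 + |y + x|) * ‖φhat (y + x)‖ + (1 + |y - x|) * ‖φhat (y - x)‖) := by
          apply integral_mono_of_nonneg
          · exact (ae_restrict_iff' measurableSet_Ioi).2 (ae_of_all _ fun y hy =>
              mul_nonneg (norm_nonneg _) (le_of_lt hy))
          · exact hRint.integrableOn
          · refine (ae_restrict_iff' measurableSet_Ioi).2 (ae_of_all _ fun y hy => ?_)
            show ‖φhat (y + x) - φhat (y - x)‖ * y
              ≤ x * ((1 + |y + x|) * ‖φhat (y + x)‖ + (1 + |y - x|) * ‖φhat (y - x)‖)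
            have hy0 : (0:ℝ) < y := hy
            have e1 : ‖φhat (y + x) - φhat (y - x)‖ ≤ ‖φhat (y + x)‖ + ‖φhat (y - x)‖ :=
              norm_sub_le _ _
            have ha1 : y ≤ x * (1 + |y + x|) := by
              have h2 : y + x ≤ |y + x| := le_abs_self _
              nlinarith [abs_nonneg (y + x)]
            have ha2 : y ≤ x * (1 + |y - x|) := by
              have h2 : y - x ≤ |y - x| := le_abs_self _
              nlinarith [abs_nonneg (y - x)]
            have hna : 0 ≤ ‖φhat (y + x)‖ := norm_nonneg _
            have hnb : 0 ≤ ‖φhat (y - x)‖ := norm_nonneg _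
            nlinarith [mul_le_mul_of_nonneg_left ha1 hna, mul_le_mul_of_nonneg_left ha2 hnb,
              mul_le_mul_of_nonneg_right e1 hy0.le]
      _ ≤ ∫ y : ℝ,
            x * ((1 + |y + x|) * ‖φhat (y + x)‖ + (1 + |y - x|) * ‖φhat (y - x)‖) :=
          setIntegral_le_integral hRint (ae_of_all _ hRnn)
      _ = x * (I1 + I1) := by
          rw [integral_const_mul, integral_add hGa hGb, hI1def,
            integral_add_right_eq_self (fun t : ℝ => (1 + |t|) * ‖φhat t‖) x,
            integral_sub_right_eq_self (fun t : ℝ => (1 + |t|) * ‖φhat t‖) x]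
      _ ≤ (2 * I1 + 32 * K * I2 + 1) * x := by nlinarith [mul_nonneg (mul_nonneg hKpos.le hI2) hx.le]
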